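/- Let Δ be a quandle (a rack satisfying a^a = a for all a), let n ≥ 1, and let f : Δⁿ → Δⁿ be an arbitrary map. Define F' : Δ^{n+1} → Δ^{n+1} by F'(x₁,…,x_{n+1}) = (y₁,…,y_{n−1}, z, yₙ), where (y₁,…,yₙ) = f(x₁,…,xₙ) and z is the unique element of Δ with z^{yₙ} = x_{n+1} (this is the map assigned to the braid A·bₙ⁻¹ when f is assigned to A ∈ Bₙ). Then (x₁,…,x_{n+1}) is a fixed point of F' if and only if (x₁,…,xₙ) is a fixed point of f and x_{n+1} = xₙ. In particular the fixed point set of F' on Δ^{n+1} is in bijection with the fixed point set of f on Δⁿ. -/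
import Mathlib


/-- The map of `Δ^{n+1}` assigned to the negatively stabilized braid `A·bₙ⁻¹`,
when `f : Δⁿ → Δⁿ` is the map assigned to `A ∈ Bₙ`:
`(x₁,…,x_{n+1}) ↦ (y₁,…,y_{n−1}, z, yₙ)` where `y = f(x₁,…,xₙ)` and
`z = rinv x_{n+1} yₙ` is the unique element with `z^{yₙ} = x_{n+1}`. -/
def negStab {Δ : Type*} (rinv : Δ → Δ → Δ) {n : ℕ} (hn : 1 ≤ n)
    (f : (Fin n → Δ) → (Fin n → Δ)) (x : Fin (n + 1) → Δ) : Fin (n + 1) → Δ :=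
  fun j =>
    if h : (j : ℕ) < n - 1 then f (Fin.init x) ⟨j, by omega⟩
    else if (j : ℕ) = n - 1 then
      rinv (x (Fin.last n)) (f (Fin.init x) ⟨n - 1, by omega⟩)
    else f (Fin.init x) ⟨n - 1, by omega⟩

/-- Markov move (negative stabilization) for quandles: `(x₁,…,x_{n+1})` is a
fixed point of the negatively stabilized map iff `(x₁,…,xₙ)` is a fixed point
of `f` and `x_{n+1} = xₙ`; hence the fixed point sets are in bijection.  Here
`rinv a b` denotes the unique `z` with `z^b = a`. -/
theorem quandle_negative_markov {Δ : Type*} (op : Δ → Δ → Δ)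
    (hinv : ∀ a b : Δ, ∃! c : Δ, op c b = a)
    (hdist : ∀ a b c : Δ, op (op a b) c = op (op a c) (op b c))
    (hq : ∀ a : Δ, op a a = a)
    (rinv : Δ → Δ → Δ)
    (hrinv : ∀ a b : Δ, op (rinv a b) b = a)
    {n : ℕ} (hn : 1 ≤ n) (f : (Fin n → Δ) → (Fin n → Δ)) :
    (∀ x : Fin (n + 1) → Δ,
      negStab rinv hn f x = x ↔
        (f (Fin.init x) = Fin.init x ∧
          x (Fin.last n) = x ⟨n - 1, by omega⟩)) ∧
    Nonempty
      ({x : Fin (n + 1) → Δ // negStab rinv hn f x = x} ≃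
        {x : Fin n → Δ // f x = x}) := by
  have runiq : ∀ a b c : Δ, op c b = a → c = rinv a b := by
    intro a b c h
    obtain ⟨d, _, hu⟩ := hinv a b
    rw [hu c h, hu (rinv a b) (hrinv a b)]
  have rself : ∀ a : Δ, rinv a a = a := fun a => (runiq a a a (hq a)).symm
  have hn1 : n - 1 < n := by omega
  have key : ∀ x : Fin (n + 1) → Δ,
      negStab rinv hn f x = x ↔
        (f (Fin.init x) = Fin.init x ∧
          x (Fin.last n) = x ⟨n - 1, by omega⟩) := by
    intro x
    set y := f (Fin.init x) with hy
    constructor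
    · intro h
      have hj : ∀ j : Fin (n + 1), negStab rinv hn f x j = x j :=
        fun j => congrFun h j
      have hlast := hj (Fin.last n)
      have hmid := hj ⟨n - 1, by omega⟩
      simp only [negStab, Fin.val_last, dif_neg (by omega : ¬ (n : ℕ) < n - 1),
        if_neg (by omega : ¬ (n : ℕ) = n - 1)] at hlast
      simp only [negStab, dif_neg (lt_irrefl (n - 1)), if_pos rfl, if_true] at hmid
      -- hlast : y ⟨n-1,_⟩ = x (last n); hmid : rinv (x last) (y ⟨n-1,_⟩) = x ⟨n-1,_⟩
      have hop : op (x ⟨n - 1, by omega⟩) (y ⟨n - 1, hn1⟩) = x (Fin.last n) := by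
        rw [← hmid]; exact hrinv _ _
      rw [← hlast] at hop
      -- op (x ⟨n-1⟩) yn = yn, also op yn yn = yn, so x ⟨n-1⟩ = yn
      obtain ⟨d, _, hu⟩ := hinv (y ⟨n - 1, hn1⟩) (y ⟨n - 1, hn1⟩)
      have hxeq : x ⟨n - 1, by omega⟩ = y ⟨n - 1, hn1⟩ := by
        rw [hu _ hop, hu _ (hq _)]
      have hfix : f (Fin.init x) = Fin.init x := by
        funext j
        rcases lt_or_ge (j : ℕ) (n - 1) with hj' | hj'
        · have := hj (Fin.castSucc j)
          simp only [negStab, Fin.coe_castSucc, dif_pos hj'] at this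
          rw [show (⟨(j : ℕ), by omega⟩ : Fin n) = j from Fin.ext rfl] at this
          exact this
        · have hjlt := j.isLt
          have hjv : j = ⟨n - 1, hn1⟩ := by
            apply Fin.ext
            show (j : ℕ) = n - 1
            omega
          rw [hjv, ← hy]
          have : Fin.init x ⟨n - 1, hn1⟩ = x ⟨n - 1, by omega⟩ := by
            simp [Fin.init, Fin.castSucc, Fin.castAdd, Fin.castLE]
          rw [this, hxeq]
      refine ⟨hfix, ?_⟩
      rw [← hlast, hxeq]
    · rintro ⟨hfix, hx2⟩
      have hinit : ∀ j : Fin n, y j = x ⟨j, by omega⟩ := by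
        intro j
        rw [hfix]
        simp [Fin.init, Fin.castSucc, Fin.castAdd, Fin.castLE]
      funext j
      rcases lt_or_ge (j : ℕ) (n - 1) with hj' | hj'
      · simp only [negStab, dif_pos hj', ← hy]
        rw [hinit ⟨j, by omega⟩]
      · rcases eq_or_lt_of_le hj' with hj2 | hj2
        · have hjv : j = ⟨n - 1, by omega⟩ := by
            apply Fin.ext
            show (j : ℕ) = n - 1
            omega
          simp only [negStab, dif_neg (by omega : ¬ (j : ℕ) < n - 1),
            if_pos hj2.symm, ← hy]
          rw [hinit ⟨n - 1, hn1⟩, ← hx2, rself, hjv, hx2]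
        · have hjv : j = Fin.last n := by
            apply Fin.ext; simp only [Fin.last]; omega
          simp only [negStab, dif_neg (by omega : ¬ (j : ℕ) < n - 1),
            if_neg (by omega : ¬ (j : ℕ) = n - 1), ← hy]
          rw [hinit ⟨n - 1, hn1⟩, hjv, hx2]
  refine ⟨key, ⟨?_⟩⟩
  have hcast : (⟨n - 1, by omega⟩ : Fin (n + 1)) = Fin.castSucc ⟨n - 1, hn1⟩ := by
    apply Fin.ext; rfl
  refine
    { toFun := fun x => ⟨Fin.init x.1, ((key x.1).mp x.2).1⟩
      invFun := fun g => ⟨Fin.snoc g.1 (g.1 ⟨n - 1, hn1⟩), ?_⟩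
      left_inv := ?_
      right_inv := ?_ }
  · rw [key]
    constructor
    · rw [Fin.init_snoc]; exact g.2
    · rw [Fin.snoc_last, hcast, Fin.snoc_castSucc]
  · rintro ⟨x, hx⟩
    ext1
    have h2 := ((key x).mp hx).2
    simp only []
    have : Fin.init x ⟨n - 1, hn1⟩ = x (Fin.last n) := by
      rw [h2, hcast]; rfl
    rw [this, Fin.snoc_init_self]
  · rintro ⟨g, hg⟩
    ext1
    simp [Fin.init_snoc]
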